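/- Let P be a nonzero real polynomial with at most n distinct complex roots (e.g. a nonzero polynomial of degree at most n), let N ≥ n be an integer, let m ∈ ℝ and ε > 0. Then there exists an integer i with |i| ≤ ⌈N/2⌉ such that the point m_i := m + i·ε satisfies |m_i − z| ≥ ε/2 for every complex root z of P. In particular, max_{|i| ≤ ⌈N/2⌉} |P(m_i)| > 0. -/

import Mathlib

open Polynomial

lemma round_eq_of_abs_sub_lt_half {x : ℝ} {i : ℤ} (h : |x - i| < 1/2) : round x = i := by
  rw [abs_sub_lt_iff] at h
  rw [round_eq, Int.floor_eq_iff]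
  constructor <;> push_cast <;> linarith [h.1, h.2]

/-- The multipoint `m[ε; N]` contains a point whose distance to every complex root of `P`
is at least `ε/2`; in particular `P` does not vanish at this point. -/
theorem exists_admissible_grid_point
    (P : Polynomial ℝ) (hP : P ≠ 0) (n : ℕ) (hdeg : P.natDegree ≤ n)
    (N : ℕ) (hN : n ≤ N) (m ε : ℝ) (hε : 0 < ε) :
    ∃ i : ℤ, |i| ≤ ⌈(N : ℚ) / 2⌉ ∧
      (∀ z : ℂ, Polynomial.aeval z P = 0 →
        ε / 2 ≤ ‖(↑(m + i * ε) : ℂ) - z‖) ∧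
      P.eval (m + i * ε) ≠ 0 := by
  set K : ℤ := ⌈(N : ℚ) / 2⌉ with hK
  have hK0 : 0 ≤ K := Int.ceil_nonneg (by positivity)
  have hKN : (N : ℤ) ≤ 2 * K := by
    have h : (N : ℚ) / 2 ≤ (K : ℚ) := Int.le_ceil _
    have : (N : ℚ) ≤ 2 * K := by linarith
    exact_mod_cast this
  -- roots of P over ℂ
  set Pc := P.map (algebraMap ℝ ℂ) with hPc
  have hPc0 : Pc ≠ 0 := by
    simpa [hPc, Polynomial.map_eq_zero] using hP
  set S : Finset ℂ := Pc.roots.toFinset with hS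
  have hScard : S.card ≤ n := by
    calc S.card ≤ Multiset.card Pc.roots := Pc.roots.toFinset_card_le
    _ ≤ Pc.natDegree := Pc.card_roots' 
    _ = P.natDegree := Polynomial.natDegree_map_eq_of_injective
        (algebraMap ℝ ℂ).injective P
    _ ≤ n := hdeg
  -- bad indices
  set f : ℂ → ℤ := fun z => round ((z.re - m) / ε) with hf
  set B : Finset ℤ := S.image f with hB
  have hBcard : B.card < (Finset.Icc (-K) K).card := by
    have h1 : B.card ≤ n := le_trans (Finset.card_image_le) hScard
    have h2 : (Finset.Icc (-K) K).card = (2 * K + 1).toNat := by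
      rw [Int.card_Icc]; ring_nf
    omega
  have hsub : ¬ Finset.Icc (-K) K ⊆ B := fun h =>
    absurd (Finset.card_le_card h) (not_le.mpr hBcard)
  obtain ⟨i, hi, hiB⟩ := Finset.not_subset.mp hsub
  rw [Finset.mem_Icc] at hi
  have hfar : ∀ z : ℂ, Polynomial.aeval z P = 0 →
      ε / 2 ≤ ‖(↑(m + i * ε) : ℂ) - z‖ := by
    intro z hz
    have hzS : z ∈ S := by
      rw [hS, Multiset.mem_toFinset, Polynomial.mem_roots hPc0]
      rwa [hPc, Polynomial.IsRoot, Polynomial.eval_map, ← Polynomial.aeval_def]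
    by_contra h
    push_neg at h
    have hre : |m + i * ε - z.re| < ε / 2 := by
      calc |m + i * ε - z.re| = |((↑(m + i * ε) : ℂ) - z).re| := by
            simp [Complex.sub_re]
      _ ≤ ‖(↑(m + i * ε) : ℂ) - z‖ := Complex.abs_re_le_norm _
      _ < ε / 2 := h
    have : f z = i := by
      apply round_eq_of_abs_sub_lt_half
      rw [abs_sub_lt_iff]
      constructor
      · rw [div_sub' hε.ne', div_lt_div_iff₀ hε (by norm_num)]
        rw [abs_sub_lt_iff] at hre
        nlinarith [hre.1, hre.2]
      · rw [sub_div' hε.ne', div_lt_div_iff₀ hε (by norm_num)]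
        rw [abs_sub_lt_iff] at hre
        nlinarith [hre.1, hre.2]
    exact hiB (Finset.mem_image.mpr ⟨z, hzS, this⟩)
  refine ⟨i, abs_le.mpr hi, hfar, fun h0 => ?_⟩
  have hz : Polynomial.aeval ((m + i * ε : ℝ) : ℂ) P = 0 := by
    rw [show ((m + i * ε : ℝ) : ℂ) = algebraMap ℝ ℂ (m + i * ε) from rfl,
      Polynomial.aeval_algebraMap_apply]
    simp [h0]
  have := hfar _ hz
  simp at this
  linarith
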